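/- Let P be an invertible n×n complex matrix and let A, B be n×n complex matrices with A P = P B and Pᴴ A = B Pᴴ. Then the matrix (P Pᴴ)^{1/2} (the positive semidefinite square root of P Pᴴ) commutes with A. -/

import Mathlib

open Matrix
open scoped ComplexOrder

/-- The positive semidefinite square root of a positive semidefinite matrix
(the definition removed from Mathlib, restated as it was). -/
noncomputable def Matrix.PosSemidef.sqrt {n 𝕜 : Type*} [Fintype n] [RCLike 𝕜] [DecidableEq n]
    {A : Matrix n n 𝕜} (hA : A.PosSemidef) : Matrix n n 𝕜 :=
  hA.1.eigenvectorUnitary.1 * diagonal ((↑) ∘ (√·) ∘ hA.1.eigenvalues) *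
  (star hA.1.eigenvectorUnitary : Matrix n n 𝕜)

lemma Matrix.PosSemidef.posSemidef_sqrt {n 𝕜 : Type*} [Fintype n] [RCLike 𝕜] [DecidableEq n]
    {A : Matrix n n 𝕜} (hA : A.PosSemidef) : hA.sqrt.PosSemidef := by
  unfold Matrix.PosSemidef.sqrt
  have hD : (diagonal ((↑) ∘ (√·) ∘ hA.1.eigenvalues) : Matrix n n 𝕜).PosSemidef :=
    PosSemidef.diagonal (fun i => RCLike.ofReal_nonneg.mpr (Real.sqrt_nonneg _))
  exact hD.mul_mul_conjTranspose_same (hA.1.eigenvectorUnitary : Matrix n n 𝕜)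

lemma Matrix.PosSemidef.sqrt_mul_self {n 𝕜 : Type*} [Fintype n] [RCLike 𝕜] [DecidableEq n]
    {A : Matrix n n 𝕜} (hA : A.PosSemidef) : hA.sqrt * hA.sqrt = A := by
  unfold Matrix.PosSemidef.sqrt
  set U : Matrix n n 𝕜 := hA.1.eigenvectorUnitary.1 with hUdef
  have hU' : star U * U = 1 := mem_unitaryGroup_iff'.mp hA.1.eigenvectorUnitary.2
  set D' : Matrix n n 𝕜 := diagonal ((↑) ∘ (√·) ∘ hA.1.eigenvalues) with hD'
  have hDD : D' * D' = diagonal (RCLike.ofReal ∘ hA.1.eigenvalues) := by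
    rw [hD', diagonal_mul_diagonal]; congr 1; funext i
    simp only [Function.comp]
    rw [← RCLike.ofReal_mul, Real.mul_self_sqrt (hA.eigenvalues_nonneg i)]
  calc U * D' * star U * (U * D' * star U) = U * (D' * D') * star U := by
        simp only [Matrix.mul_assoc]; rw [← Matrix.mul_assoc (star U) U, hU', Matrix.one_mul]
    _ = A := by rw [hDD]; exact hA.1.spectral_theorem.symm

lemma commute_of_commute_sq {m : ℕ} {S A : Matrix (Fin m) (Fin m) ℂ}
    (hS : S.PosSemidef) (h : A * (S * S) = (S * S) * A) : S * A = A * S := by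
  set U : Matrix (Fin m) (Fin m) ℂ := (hS.1.eigenvectorUnitary : Matrix (Fin m) (Fin m) ℂ)
    with hUdef
  have hU : U * star U = 1 := mem_unitaryGroup_iff.mp hS.1.eigenvectorUnitary.2
  have hU' : star U * U = 1 := mem_unitaryGroup_iff'.mp hS.1.eigenvectorUnitary.2
  have cUsU : ∀ X : Matrix (Fin m) (Fin m) ℂ, U * (star U * X) = X := fun X => by
    rw [← Matrix.mul_assoc, hU, Matrix.one_mul]
  have csUU : ∀ X : Matrix (Fin m) (Fin m) ℂ, star U * (U * X) = X := fun X => by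
    rw [← Matrix.mul_assoc, hU', Matrix.one_mul]
  set d : Fin m → ℝ := hS.1.eigenvalues with hddef
  have hd : ∀ i, 0 ≤ d i := hS.eigenvalues_nonneg
  set D : Matrix (Fin m) (Fin m) ℂ := diagonal (fun i => (d i : ℂ)) with hDdef
  have hspec : S = U * D * star U := hS.1.spectral_theorem
  set C : Matrix (Fin m) (Fin m) ℂ := star U * A * U with hCdef
  have hC2 : C * (D * D) = (D * D) * C := by
    have g : star U * (A * (S * S) * U) = star U * ((S * S) * A * U) := by rw [h]
    rw [hspec] at g
    rw [hCdef]
    simp only [Matrix.mul_assoc, csUU, cUsU, hU', hU, Matrix.mul_one, Matrix.one_mul] at g ⊢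
    exact g
  have hCD : C * D = D * C := by
    ext i j
    have h2 : C i j * ((d j : ℂ) * (d j : ℂ)) = ((d i : ℂ) * (d i : ℂ)) * C i j := by
      have := congrFun (congrFun hC2 i) j
      simpa [hDdef, diagonal_mul_diagonal, mul_diagonal, diagonal_mul] using this
    by_cases hij : d i = d j
    · simp [hDdef, mul_diagonal, diagonal_mul, hij, mul_comm]
    · have hzero : C i j = 0 := by
        by_contra hC0
        have hcancel : (d j : ℂ) * (d j : ℂ) = (d i : ℂ) * (d i : ℂ) := by
          have h2' := h2
          rw [mul_comm ((d i : ℂ) * (d i : ℂ)) (C i j)] at h2'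
          exact mul_left_cancel₀ hC0 h2'
        have : d j * d j = d i * d i := by exact_mod_cast hcancel
        exact hij ((mul_self_inj (hd j) (hd i)).mp this).symm
      simp [hDdef, mul_diagonal, diagonal_mul, hzero]
  have g : U * ((C * D) * star U) = U * ((D * C) * star U) := by rw [hCD]
  rw [hCdef] at g
  rw [hspec]
  simp only [Matrix.mul_assoc, csUU, cUsU, hU', hU, Matrix.mul_one, Matrix.one_mul] at g ⊢
  exact g.symm

theorem sqrt_commutes (n : ℕ) (P A B : Matrix (Fin n) (Fin n) ℂ)
    (hP : IsUnit P) (h1 : A * P = P * B) (h2 : Pᴴ * A = B * Pᴴ) :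
    (Matrix.posSemidef_self_mul_conjTranspose P).sqrt * A =
      A * (Matrix.posSemidef_self_mul_conjTranspose P).sqrt := by
  have hcomm : A * (P * Pᴴ) = (P * Pᴴ) * A := by
    calc A * (P * Pᴴ) = (A * P) * Pᴴ := by rw [Matrix.mul_assoc]
      _ = P * (B * Pᴴ) := by rw [h1, Matrix.mul_assoc]
      _ = P * (Pᴴ * A) := by rw [h2]
      _ = (P * Pᴴ) * A := by rw [Matrix.mul_assoc]
  exact commute_of_commute_sq (Matrix.posSemidef_self_mul_conjTranspose P).posSemidef_sqrt
    (by rw [(Matrix.posSemidef_self_mul_conjTranspose P).sqrt_mul_self]; exact hcomm)
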